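/- Let m be a positive integer and let θ₁, …, θ_{2m} be pairwise distinct numbers in (0,π) with θ_{2m+1−i} = π − θ_i for i = 1, …, m. For α ∈ {0,1} set φ_j^{α} = (2j+α)π/(2m), and define λ_i = ∫_{−1}^{1} ∏_{k=1, k≠i}^{2m} (t − cosθ_k)/(cosθ_i − cosθ_k) dt for i = 1, …, 2m. Then for every T ∈ Π_{2m−1}(S²), ∫_{S²} T(ξ) dω(ξ) = (π/m) Σ_{i=1}^{m} λ_i Σ_{j=0}^{2m−1} T̃(θ_i, φ_j^{0}) + (π/m) Σ_{i=m+1}^{2m} λ_i Σ_{j=0}^{2m−1} T̃(θ_i, φ_j^{1}). -/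

import Mathlib

open Real Finset

lemma expint (k : ℤ) (hk : k ≠ 0) :
    ∫ φ in (0:ℝ)..(2*π), Complex.exp ((k:ℂ) * φ * Complex.I) = 0 := by
  have hc : (k:ℂ) * Complex.I ≠ 0 := by
    simp [Complex.I_ne_zero, hk]
  have : ∀ φ : ℝ, (k:ℂ) * φ * Complex.I = ((k:ℂ)*Complex.I) * φ := by intro φ; ring
  simp_rw [this]
  rw [integral_exp_mul_complex hc]
  have h1 : (k:ℂ) * Complex.I * (2*π:ℝ) = (k:ℤ) * (2 * π * Complex.I) := by
    push_cast; ring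
  rw [h1, Complex.exp_int_mul_two_pi_mul_I]
  simp

lemma expsum (m : ℕ) (hm : 0 < m) (k : ℤ) (hk : k ≠ 0) (hk2 : k.natAbs < 2*m) (s : ℝ) :
    ∑ j ∈ Finset.range (2*m), Complex.exp ((k:ℂ) * (2*j*π/(2*m) + s) * Complex.I) = 0 := by
  have hm' : (m:ℂ) ≠ 0 := by exact_mod_cast hm.ne'
  have hz : ∀ j : ℕ, (k:ℂ) * (2*j*π/(2*m) + s) * Complex.I
      = (j:ℕ) * ((k:ℂ) * (π/m) * Complex.I) + (k * s * Complex.I) := by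
    intro j; field_simp
  simp_rw [hz, Complex.exp_add, Complex.exp_nat_mul, ← Finset.sum_mul]
  have hne : Complex.exp ((k:ℂ) * (π/m) * Complex.I) ≠ 1 := by
    intro h
    rw [Complex.exp_eq_one_iff] at h
    obtain ⟨n, hn⟩ := h
    have hπ : (π:ℂ) ≠ 0 := by exact_mod_cast Real.pi_ne_zero
    have hkn : (k:ℂ) = 2 * n * m := by
      field_simp at hn
      have h2 : (k:ℂ) * ((π:ℂ)*Complex.I) = (2*(n:ℂ)*m) * ((π:ℂ)*Complex.I) := by
        linear_combination ((π:ℂ) * Complex.I) * hn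
      exact mul_right_cancel₀ (mul_ne_zero hπ Complex.I_ne_zero) h2
    have hk' : k = 2 * n * m := by exact_mod_cast hkn
    have hn0 : n ≠ 0 := by rintro rfl; simp at hk'; exact hk hk'
    have habs : |k| < 2*m := by
      rw [Int.abs_eq_natAbs]; exact_mod_cast hk2
    have h1 : (1:ℤ) ≤ |n| := Int.one_le_abs hn0
    have h2 : (2*m:ℤ) ≤ |k| := by
      rw [hk', abs_mul, abs_mul]
      have e1 : |(2:ℤ)| = 2 := by norm_num
      have e2 : |(m:ℤ)| = m := abs_of_nonneg (by positivity)
      rw [e1, e2]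
      nlinarith [abs_nonneg n, Int.ofNat_nonneg m]
    linarith
  rw [geom_sum_eq hne]
  have hpow : Complex.exp ((k:ℂ) * (π/m) * Complex.I) ^ (2*m) = 1 := by
    rw [← Complex.exp_nat_mul]
    have : (2*m : ℕ) * ((k:ℂ) * (π/m) * Complex.I) = (k:ℤ) * (2*π*Complex.I) := by
      push_cast; field_simp
    rw [this, Complex.exp_int_mul_two_pi_mul_I]
  rw [hpow]
  simp

lemma trig_expand (a b : ℕ) (φ : ℝ) :
    ((cos φ : ℂ))^a * ((sin φ : ℂ))^b =
    ∑ p ∈ Finset.range (a+1), ∑ q ∈ Finset.range (b+1),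
      ((-1:ℂ))^q * (a.choose p) * (b.choose q) * (1/2)^a * (Complex.I/2)^b
        * Complex.exp ((2*(p:ℤ) - a + 2*q - b : ℤ) * φ * Complex.I) := by
  set e := Complex.exp ((φ:ℂ) * Complex.I) with he
  have he0 : e ≠ 0 := Complex.exp_ne_zero _
  have hcos : (cos φ : ℂ) = (e + e⁻¹) * (1/2) := by
    rw [Complex.ofReal_cos, Complex.cos, he, ← Complex.exp_neg]
    ring_nf
  have hsin : (sin φ : ℂ) = ((-e) + e⁻¹) * (Complex.I/2) := by
    rw [Complex.ofReal_sin, Complex.sin, he, ← Complex.exp_neg]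
    ring_nf
  rw [hcos, hsin, mul_pow, mul_pow, add_pow, add_pow, Finset.sum_mul, Finset.sum_mul]
  refine Finset.sum_congr rfl fun p hp => ?_
  rw [Finset.sum_mul, Finset.mul_sum]
  refine Finset.sum_congr rfl fun q hq => ?_
  rw [Finset.mem_range] at hp hq
  have hpa : p ≤ a := by omega
  have hqb : q ≤ b := by omega
  have hexp : Complex.exp ((2*(p:ℤ) - a + 2*q - b : ℤ) * φ * Complex.I)
      = e ^ (2*(p:ℤ) - a + 2*q - b) := by
    rw [mul_assoc, Complex.exp_int_mul, he]
  have hsplit : e ^ (2*(p:ℤ) - a + 2*q - b)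
      = e ^ p * (e⁻¹) ^ (a - p) * (e ^ q * (e⁻¹) ^ (b - q)) := by
    rw [inv_pow, inv_pow, ← zpow_natCast e p, ← zpow_natCast e q,
      ← zpow_natCast e (a-p), ← zpow_natCast e (b-q), ← zpow_neg, ← zpow_neg,
      ← zpow_add₀ he0, ← zpow_add₀ he0, ← zpow_add₀ he0]
    congr 1
    push_cast [Nat.cast_sub hpa, Nat.cast_sub hqb]
    ring
  rw [hexp, hsplit, neg_pow]
  ring

lemma quad_phi (m : ℕ) (hm : 0 < m) (a b : ℕ) (hab : a + b < 2*m) (s : ℝ) :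
    π/m * ∑ j ∈ Finset.range (2*m),
        cos (2*j*π/(2*m) + s)^a * sin (2*j*π/(2*m) + s)^b
     = ∫ φ in (0:ℝ)..(2*π), cos φ^a * sin φ^b := by
  have hm0 : (m:ℝ) ≠ 0 := by exact_mod_cast hm.ne'
  apply Complex.ofReal_injective
  rw [Complex.ofReal_mul, Complex.ofReal_sum,
    ← intervalIntegral.integral_ofReal (f := fun φ => cos φ^a * sin φ^b)]
  simp only [Complex.ofReal_mul, Complex.ofReal_pow, Complex.ofReal_div]
  simp_rw [trig_expand]
  have hIc : ∀ (c : ℂ) (k : ℤ), IntervalIntegrable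
      (fun φ:ℝ => c * Complex.exp ((k:ℂ)*φ*Complex.I)) MeasureTheory.volume 0 (2*π) := by
    intro c k
    apply Continuous.intervalIntegrable
    fun_prop
  have hIs : ∀ p : ℕ, IntervalIntegrable
      (fun φ:ℝ => ∑ q ∈ Finset.range (b+1),
        ((-1:ℂ))^q * (a.choose p) * (b.choose q) * (1/2)^a * (Complex.I/2)^b
        * Complex.exp ((2*(p:ℤ) - a + 2*q - b : ℤ) * φ * Complex.I))
      MeasureTheory.volume 0 (2*π) := by
    intro p
    apply Continuous.intervalIntegrable
    apply continuous_finset_sum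
    intro q _
    fun_prop
  rw [intervalIntegral.integral_finset_sum (fun p _ => hIs p)]
  have hinner : ∀ p ∈ Finset.range (a+1),
      (∫ φ in (0:ℝ)..(2*π), ∑ q ∈ Finset.range (b+1),
        ((-1:ℂ))^q * (a.choose p) * (b.choose q) * (1/2)^a * (Complex.I/2)^b
        * Complex.exp ((2*(p:ℤ) - a + 2*q - b : ℤ) * φ * Complex.I))
      = ∑ q ∈ Finset.range (b+1), ∫ φ in (0:ℝ)..(2*π),
        ((-1:ℂ))^q * (a.choose p) * (b.choose q) * (1/2)^a * (Complex.I/2)^b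
        * Complex.exp ((2*(p:ℤ) - a + 2*q - b : ℤ) * φ * Complex.I) := by
    intro p _
    exact intervalIntegral.integral_finset_sum (fun q _ => hIc _ _)

  rw [Finset.sum_congr rfl hinner]
  have hswap : ∀ F : ℕ → ℕ → ℕ → ℂ,
      ∑ j ∈ Finset.range (2*m), ∑ p ∈ Finset.range (a+1), ∑ q ∈ Finset.range (b+1), F j p q
      = ∑ p ∈ Finset.range (a+1), ∑ q ∈ Finset.range (b+1), ∑ j ∈ Finset.range (2*m), F j p q := by
    intro F
    rw [Finset.sum_comm]
    exact Finset.sum_congr rfl fun p _ => Finset.sum_comm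
  rw [hswap, Finset.mul_sum]
  refine Finset.sum_congr rfl fun p hp => ?_
  rw [Finset.mul_sum]
  refine Finset.sum_congr rfl fun q hq => ?_
  rw [Finset.mem_range] at hp hq
  set k : ℤ := 2*(p:ℤ) - a + 2*q - b with hkdef
  set c : ℂ := ((-1:ℂ))^q * (a.choose p) * (b.choose q) * (1/2)^a * (Complex.I/2)^b with hc
  simp_rw [← Finset.mul_sum]
  by_cases hk : k = 0
  · simp only [hk]
    push_cast
    simp only [zero_mul, Complex.exp_zero]
    rw [Finset.sum_const, Finset.card_range, intervalIntegral.integral_const]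
    have hm0c : (m:ℂ) ≠ 0 := by exact_mod_cast hm.ne'
    push_cast
    field_simp
    simp only [Complex.real_smul]; push_cast; ring
  · have hsum0 : ∑ j ∈ Finset.range (2*m),
        Complex.exp ((k:ℂ) * ((2*(j:ℝ)*π/(2*(m:ℝ)) + s) : ℝ) * Complex.I) = 0 := by
      have := expsum m hm k hk (by omega) s
      convert this using 2 with j
      push_cast
      ring_nf
    calc (π:ℂ)/m * (c * ∑ j ∈ Finset.range (2*m),
          Complex.exp ((k:ℂ) * ((2*(j:ℝ)*π/(2*(m:ℝ)) + s) : ℝ) * Complex.I))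
        = (π:ℂ)/m * (c * 0) := by rw [hsum0]
      _ = c * 0 := by ring
      _ = c * ∫ φ in (0:ℝ)..(2*π), Complex.exp ((k:ℂ) * φ * Complex.I) := by
          rw [expint k hk]
      _ = _ := (intervalIntegral.integral_const_mul _ _).symm

lemma Ival_zero (a b : ℕ) (h : ¬(Even a ∧ Even b)) :
    (∫ φ in (0:ℝ)..(2*π), cos φ^a * sin φ^b) = 0 := by
  rw [not_and_or, Nat.not_even_iff_odd, Nat.not_even_iff_odd] at h
  rcases h with h | h
  · -- a odd : reflect x ↦ π - x
    have hper : Function.Periodic (fun x : ℝ => cos x^a * sin x^b) (2*π) := by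
      intro x
      simp [Real.cos_add_two_pi, Real.sin_add_two_pi]
    have h1 := intervalIntegral.integral_comp_sub_left
      (fun x : ℝ => cos x^a * sin x^b) π (a := 0) (b := 2*π)
    simp only [Real.cos_pi_sub, Real.sin_pi_sub, sub_zero, h.neg_pow, neg_mul] at h1
    rw [show π - 2*π = -π by ring, intervalIntegral.integral_neg] at h1
    have h2 : (∫ x in (-π)..π, cos x^a * sin x^b)
        = ∫ x in (0:ℝ)..(2*π), cos x^a * sin x^b := by
      have h4 := hper.intervalIntegral_add_eq (-π) 0
      rw [show -π + 2*π = π by ring, zero_add] at h4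
      exact h4
    rw [h2] at h1
    linarith
  · -- b odd : reflect x ↦ 2π - x
    have h1 := intervalIntegral.integral_comp_sub_left
      (fun x : ℝ => cos x^a * sin x^b) (2*π) (a := 0) (b := 2*π)
    have hc : ∀ x : ℝ, cos (2*π - x) = cos x := by
      intro x; rw [Real.cos_sub]; simp
    have hs : ∀ x : ℝ, sin (2*π - x) = -sin x := by
      intro x; rw [Real.sin_sub]; simp
    simp only [hc, hs, h.neg_pow, mul_neg, sub_zero, sub_self] at h1
    rw [intervalIntegral.integral_neg] at h1
    linarith

lemma cos_subst (P : Polynomial ℝ) :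
    (∫ ϑ in (0:ℝ)..π, P.eval (cos ϑ) * sin ϑ) = ∫ t in (-1:ℝ)..1, P.eval t := by
  have h1 : ∀ x ∈ Set.uIcc (0:ℝ) π, HasDerivAt cos (-sin x) x := fun x _ => Real.hasDerivAt_cos x
  have key := intervalIntegral.integral_comp_smul_deriv
    (f := fun x => Real.cos x) (f' := fun x => -Real.sin x) (g := fun t => P.eval t)
    (a := 0) (b := π) h1 (Real.continuous_sin.neg.continuousOn) P.continuous
  simp only [Function.comp, Real.cos_zero, Real.cos_pi, smul_eq_mul] at key
  have heq : (∫ ϑ in (0:ℝ)..π, -sin ϑ * P.eval (cos ϑ))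
      = -∫ ϑ in (0:ℝ)..π, P.eval (cos ϑ) * sin ϑ := by
    rw [← intervalIntegral.integral_neg]
    apply intervalIntegral.integral_congr
    intro x _
    simp [mul_comm]
  rw [heq, intervalIntegral.integral_symm (-1:ℝ) 1] at key
  linarith

noncomputable def Ival (a b : ℕ) : ℝ := ∫ φ in (0:ℝ)..(2*π), cos φ^a * sin φ^b

lemma eval_expand (T : MvPolynomial (Fin 3) ℝ) (x y z : ℝ) :
    MvPolynomial.eval ![x, y, z] T
      = ∑ d ∈ T.support, T.coeff d * (x^(d 0) * y^(d 1) * z^(d 2)) := by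
  rw [MvPolynomial.eval_eq']
  refine Finset.sum_congr rfl fun d _ => ?_
  rw [Fin.prod_univ_three]
  simp

noncomputable def Pq (T : MvPolynomial (Fin 3) ℝ) : Polynomial ℝ :=
  ∑ d ∈ T.support, Polynomial.C (T.coeff d * Ival (d 0) (d 1))
    * (1 - Polynomial.X^2)^((d 0 + d 1)/2) * Polynomial.X^(d 2)

lemma Pq_eval (T : MvPolynomial (Fin 3) ℝ) (ϑ : ℝ) :
    (Pq T).eval (cos ϑ) = ∑ d ∈ T.support,
      T.coeff d * Ival (d 0) (d 1) * sin ϑ^(d 0 + d 1) * cos ϑ^(d 2) := by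
  rw [Pq, Polynomial.eval_finset_sum]
  refine Finset.sum_congr rfl fun d _ => ?_
  simp only [Polynomial.eval_mul, Polynomial.eval_pow, Polynomial.eval_C, Polynomial.eval_sub,
    Polynomial.eval_one, Polynomial.eval_X]
  by_cases h : Even (d 0) ∧ Even (d 1)
  · obtain ⟨h0, h1⟩ := h
    have he : Even (d 0 + d 1) := h0.add h1
    have h2 : (1 - cos ϑ^2) = sin ϑ^2 := by
      have := Real.sin_sq_add_cos_sq ϑ; linarith
    rw [h2, ← pow_mul, Nat.mul_div_cancel' he.two_dvd]
  · rw [show Ival (d 0) (d 1) = 0 from Ival_zero _ _ h]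
    ring

lemma Pq_degree (T : MvPolynomial (Fin 3) ℝ) (m : ℕ) (hm : 0 < m)
    (hT : T.totalDegree ≤ 2*m - 1) : (Pq T).degree < (2*m : ℕ) := by
  apply lt_of_le_of_lt (Polynomial.degree_sum_le _ _)
  rw [Finset.sup_lt_iff (by exact_mod_cast WithBot.bot_lt_coe (2*m))]
  intro d hd
  have hdeg : d 0 + d 1 + d 2 ≤ 2*m - 1 := by
    have h1 := MvPolynomial.le_totalDegree hd
    have h2 : d.sum (fun _ e => e) = d 0 + d 1 + d 2 := by
      rw [Finsupp.sum_fintype _ _ (fun _ => rfl), Fin.sum_univ_three]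
    omega
  have hbd : (Polynomial.C (T.coeff d * Ival (d 0) (d 1))
      * (1 - Polynomial.X^2)^((d 0 + d 1)/2) * Polynomial.X^(d 2) : Polynomial ℝ).degree
      ≤ (2*((d 0 + d 1)/2) + d 2 : ℕ) := by
    compute_degree
    show (((d 0 + d 1)/2 : ℕ) : WithBot ℕ) * 2 + ((d 2 : ℕ) : WithBot ℕ)
      ≤ ((2 * ((d 0 + d 1)/2) + d 2 : ℕ) : WithBot ℕ)
    norm_cast
    omega
  refine lt_of_le_of_lt hbd ?_
  exact_mod_cast (by omega : 2*((d 0 + d 1)/2) + d 2 < 2*m)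

/-- Proposition 3.2: Let `θ₁,…,θ_{2m}` be pairwise distinct points of
`(0,π)` with `θ_{2m+1-i} = π - θᵢ`, and let `λᵢ = ∫_{-1}^1 ∏_{k≠i}
(t - cos θ_k)/(cos θᵢ - cos θ_k) dt`.  Then for every `T ∈ Π_{2m-1}(S²)`,
`∫_{S²} T dω = (π/m) ∑_{i=1}^m λᵢ ∑_{j=0}^{2m-1} T̃(θᵢ, φⱼ⁰)
 + (π/m) ∑_{i=m+1}^{2m} λᵢ ∑_{j=0}^{2m-1} T̃(θᵢ, φⱼ¹)`,
where `φⱼ^α = (2j+α)π/(2m)` and `∫_{S²} F dω = ∫₀^π ∫₀^{2π} F̃(θ,φ) sin θ dφ dθ`. -/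
theorem statement8 (m : ℕ) (hm : 0 < m)
    (θ : ℕ → ℝ)
    (hθ : ∀ i ∈ Icc 1 (2 * m), θ i ∈ Set.Ioo 0 π)
    (hinj : Set.InjOn θ (Set.Icc 1 (2 * m)))
    (hsym : ∀ i ∈ Icc 1 m, θ (2 * m + 1 - i) = π - θ i)
    (lam : ℕ → ℝ)
    (hlam : ∀ i ∈ Icc 1 (2 * m),
      lam i = ∫ t in (-1 : ℝ)..1,
        ∏ k ∈ (Icc 1 (2 * m)).erase i, (t - cos (θ k)) / (cos (θ i) - cos (θ k)))
    (T : MvPolynomial (Fin 3) ℝ) (hT : T.totalDegree ≤ 2 * m - 1) :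
    (∫ ϑ in (0 : ℝ)..π,
      (∫ φ in (0 : ℝ)..(2 * π),
        MvPolynomial.eval ![sin ϑ * cos φ, sin ϑ * sin φ, cos ϑ] T * sin ϑ))
    = π / m * ∑ i ∈ Icc 1 m, lam i * ∑ j ∈ Finset.range (2 * m),
        MvPolynomial.eval
          ![sin (θ i) * cos ((2 * j) * π / (2 * m)),
            sin (θ i) * sin ((2 * j) * π / (2 * m)), cos (θ i)] T
      + π / m * ∑ i ∈ Icc (m + 1) (2 * m), lam i * ∑ j ∈ Finset.range (2 * m),
          MvPolynomial.eval
            ![sin (θ i) * cos ((2 * j + 1) * π / (2 * m)),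
              sin (θ i) * sin ((2 * j + 1) * π / (2 * m)), cos (θ i)] T := by
  clear hsym
  set v : ℕ → ℝ := fun i => cos (θ i) with hv
  -- injectivity of nodes
  have hvinj : Set.InjOn v ↑(Icc 1 (2*m)) := by
    intro i hi j hj hij
    rw [Finset.coe_Icc] at hi hj
    have hθi := hθ i (by simpa [Finset.mem_Icc] using hi)
    have hθj := hθ j (by simpa [Finset.mem_Icc] using hj)
    exact hinj hi hj (Real.injOn_cos ⟨hθi.1.le, hθi.2.le⟩ ⟨hθj.1.le, hθj.2.le⟩ hij)
  have hcard : #(Icc 1 (2*m)) = 2*m := by rw [Nat.card_Icc]; omega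
  have hlag : Pq T = Lagrange.interpolate (Icc 1 (2*m)) v (fun i => (Pq T).eval (v i)) :=
    Lagrange.eq_interpolate hvinj (by rw [hcard]; exact Pq_degree T m hm hT)
  -- LHS computation
  have hinner : ∀ ϑ : ℝ,
      (∫ φ in (0 : ℝ)..(2 * π),
        MvPolynomial.eval ![sin ϑ * cos φ, sin ϑ * sin φ, cos ϑ] T * sin ϑ)
      = (Pq T).eval (cos ϑ) * sin ϑ := by
    intro ϑ
    have step1 : (∫ φ in (0 : ℝ)..(2 * π),
        MvPolynomial.eval ![sin ϑ * cos φ, sin ϑ * sin φ, cos ϑ] T * sin ϑ)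
        = ∫ φ in (0 : ℝ)..(2 * π), ∑ d ∈ T.support,
          (T.coeff d * (sin ϑ^(d 0 + d 1) * cos ϑ^(d 2) * sin ϑ))
            * (cos φ^(d 0) * sin φ^(d 1)) := by
      apply intervalIntegral.integral_congr
      intro φ _
      dsimp only
      rw [eval_expand, Finset.sum_mul]
      refine Finset.sum_congr rfl fun d _ => ?_
      rw [mul_pow, mul_pow, pow_add]
      ring
    have hci : ∀ d : Fin 3 →₀ ℕ, IntervalIntegrable
        (fun φ:ℝ => (T.coeff d * (sin ϑ^(d 0 + d 1) * cos ϑ^(d 2) * sin ϑ))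
          * (cos φ^(d 0) * sin φ^(d 1))) MeasureTheory.volume 0 (2*π) := by
      intro d
      apply Continuous.intervalIntegrable
      fun_prop
    rw [step1, intervalIntegral.integral_finset_sum (fun d _ => hci d)]
    rw [Pq_eval, Finset.sum_mul]
    refine Finset.sum_congr rfl fun d _ => ?_
    rw [intervalIntegral.integral_const_mul]
    show _ * Ival (d 0) (d 1) = _
    ring
  simp_rw [hinner, cos_subst (Pq T)]
  -- evaluate the Lagrange basis
  have hbasis : ∀ i ∈ Icc 1 (2*m), ∀ t : ℝ,
      (Lagrange.basis (Icc 1 (2*m)) v i).eval t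
      = ∏ k ∈ (Icc 1 (2*m)).erase i, (t - cos (θ k)) / (cos (θ i) - cos (θ k)) := by
    intro i _ t
    rw [Lagrange.basis, Polynomial.eval_prod]
    refine Finset.prod_congr rfl fun k _ => ?_
    rw [Lagrange.basisDivisor]
    simp only [Polynomial.eval_mul, Polynomial.eval_C, Polynomial.eval_sub, Polynomial.eval_X]
    rw [div_eq_inv_mul]
  -- LHS = ∑ i, eval * lam
  have hLHS : (∫ t in (-1:ℝ)..1, (Pq T).eval t)
      = ∑ i ∈ Icc 1 (2*m), (Pq T).eval (v i) * lam i := by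
    have : ∀ t : ℝ, (Pq T).eval t = ∑ i ∈ Icc 1 (2*m),
        (Pq T).eval (v i) * (Lagrange.basis (Icc 1 (2*m)) v i).eval t := by
      intro t
      conv_lhs => rw [hlag]
      rw [Lagrange.interpolate_apply, Polynomial.eval_finset_sum]
      exact Finset.sum_congr rfl fun i _ => by
        rw [Polynomial.eval_mul, Polynomial.eval_C]
    rw [intervalIntegral.integral_congr (g := fun t => ∑ i ∈ Icc 1 (2*m),
      (Pq T).eval (v i) * (Lagrange.basis (Icc 1 (2*m)) v i).eval t)
      (fun t _ => this t)]
    have hci : ∀ i : ℕ, IntervalIntegrable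
        (fun t:ℝ => (Pq T).eval (v i) * (Lagrange.basis (Icc 1 (2*m)) v i).eval t)
        MeasureTheory.volume (-1) 1 := by
      intro i
      apply Continuous.intervalIntegrable
      exact continuous_const.mul (Lagrange.basis (Icc 1 (2*m)) v i).continuous
    rw [intervalIntegral.integral_finset_sum (fun i _ => hci i)]
    refine Finset.sum_congr rfl fun i hi => ?_
    rw [intervalIntegral.integral_const_mul, hlam i hi]
    congr 1
    apply intervalIntegral.integral_congr
    intro t _
    exact hbasis i hi t
  rw [hLHS]
  -- RHS computation
  have key : ∀ i ∈ Icc 1 (2*m), ∀ s' : ℝ,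
      π/m * ∑ j ∈ Finset.range (2*m),
        MvPolynomial.eval ![sin (θ i) * cos (2*j*π/(2*m)+s'),
          sin (θ i) * sin (2*j*π/(2*m)+s'), cos (θ i)] T
      = (Pq T).eval (cos (θ i)) := by
    intro i _ s'
    rw [Pq_eval]
    simp_rw [eval_expand]
    rw [Finset.sum_comm, Finset.mul_sum]
    refine Finset.sum_congr rfl fun d hd => ?_
    have hab : d 0 + d 1 < 2*m := by
      have h1 := MvPolynomial.le_totalDegree hd
      have h2 : d.sum (fun _ e => e) = d 0 + d 1 + d 2 := by
        rw [Finsupp.sum_fintype _ _ (fun _ => rfl), Fin.sum_univ_three]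
      omega
    have hq := quad_phi m hm (d 0) (d 1) hab s'
    have h2 : ∑ j ∈ Finset.range (2*m), T.coeff d *
        ((sin (θ i) * cos (2*j*π/(2*m)+s'))^(d 0) * (sin (θ i) * sin (2*j*π/(2*m)+s'))^(d 1)
          * cos (θ i)^(d 2))
        = (T.coeff d * sin (θ i)^(d 0 + d 1) * cos (θ i)^(d 2))
          * ∑ j ∈ Finset.range (2*m), cos (2*j*π/(2*m)+s')^(d 0) * sin (2*j*π/(2*m)+s')^(d 1) := by
      rw [Finset.mul_sum]
      refine Finset.sum_congr rfl fun j _ => ?_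
      rw [mul_pow, mul_pow, pow_add]
      ring
    rw [h2]
    calc π/m * ((T.coeff d * sin (θ i)^(d 0 + d 1) * cos (θ i)^(d 2))
          * ∑ j ∈ Finset.range (2*m), cos (2*j*π/(2*m)+s')^(d 0) * sin (2*j*π/(2*m)+s')^(d 1))
        = (T.coeff d * sin (θ i)^(d 0 + d 1) * cos (θ i)^(d 2))
          * (π/m * ∑ j ∈ Finset.range (2*m),
              cos (2*j*π/(2*m)+s')^(d 0) * sin (2*j*π/(2*m)+s')^(d 1)) := by ring
      _ = (T.coeff d * sin (θ i)^(d 0 + d 1) * cos (θ i)^(d 2)) * Ival (d 0) (d 1) := by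
          rw [hq]; rfl
      _ = _ := by ring
  have key0 : ∀ i ∈ Icc 1 (2*m),
      π/m * ∑ j ∈ Finset.range (2*m),
        MvPolynomial.eval ![sin (θ i) * cos ((2*j)*π/(2*m)),
          sin (θ i) * sin ((2*j)*π/(2*m)), cos (θ i)] T
      = (Pq T).eval (v i) := by
    intro i hi
    have := key i hi 0
    simpa using this
  have key1 : ∀ i ∈ Icc 1 (2*m),
      π/m * ∑ j ∈ Finset.range (2*m),
        MvPolynomial.eval ![sin (θ i) * cos ((2*j+1)*π/(2*m)),
          sin (θ i) * sin ((2*j+1)*π/(2*m)), cos (θ i)] T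
      = (Pq T).eval (v i) := by
    intro i hi
    have h := key i hi (π/(2*m))
    have hangle : ∀ j : ℕ, 2*(j:ℝ)*π/(2*(m:ℝ)) + π/(2*(m:ℝ)) = (2*(j:ℝ)+1)*π/(2*(m:ℝ)) := by
      intro j; ring
    simp_rw [hangle] at h
    exact h
  have hsum1 : π / m * ∑ i ∈ Icc 1 m, lam i * ∑ j ∈ Finset.range (2 * m),
        MvPolynomial.eval
          ![sin (θ i) * cos ((2 * j) * π / (2 * m)),
            sin (θ i) * sin ((2 * j) * π / (2 * m)), cos (θ i)] T
      = ∑ i ∈ Icc 1 m, lam i * (Pq T).eval (v i) := by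
    rw [Finset.mul_sum]
    refine Finset.sum_congr rfl fun i hi => ?_
    have hi' : i ∈ Icc 1 (2*m) := by
      rw [Finset.mem_Icc] at hi ⊢; omega
    rw [← key0 i hi']
    ring
  have hsum2 : π / m * ∑ i ∈ Icc (m+1) (2*m), lam i * ∑ j ∈ Finset.range (2 * m),
        MvPolynomial.eval
          ![sin (θ i) * cos ((2 * j + 1) * π / (2 * m)),
            sin (θ i) * sin ((2 * j + 1) * π / (2 * m)), cos (θ i)] T
      = ∑ i ∈ Icc (m+1) (2*m), lam i * (Pq T).eval (v i) := by
    rw [Finset.mul_sum]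
    refine Finset.sum_congr rfl fun i hi => ?_
    have hi' : i ∈ Icc 1 (2*m) := by
      rw [Finset.mem_Icc] at hi ⊢; omega
    rw [← key1 i hi']
    ring
  rw [hsum1, hsum2]
  have hdisj : Disjoint (Icc 1 m) (Icc (m+1) (2*m)) := by
    rw [Finset.disjoint_left]
    intro x hx hx'
    rw [Finset.mem_Icc] at hx hx'
    omega
  have hunion : Icc 1 m ∪ Icc (m+1) (2*m) = Icc 1 (2*m) := by
    ext x
    simp only [Finset.mem_union, Finset.mem_Icc]
    omega
  rw [← Finset.sum_union hdisj, hunion]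
  exact Finset.sum_congr rfl fun i _ => mul_comm _ _
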